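/- Let D = (Σ, Const) be a precedence-and-response-only declarative process. Then PossIm(D) is exactly the set of all down-sets I of (Σ, ≲occ) for which the relation ⪯_I is antisymmetric. That is, a subset I ⊆ Σ is the image of some trace of D if and only if I is a down-set of (Σ, ≲occ) and ⪯_I is antisymmetric. -/

import Mathlib

/-- The implied-occurrence relation `≲occ`. -/
def occRel {α : Type*} (Prec Resp : α → α → Prop) : α → α → Prop :=
  Relation.ReflTransGen (fun a b => Prec a b ∨ Resp b a)

/-- The order-preserving relation `→ord`. -/
def ordRel {α : Type*} (Prec Resp : α → α → Prop) : α → α → Prop :=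
  fun a b => Prec a b ∨ Resp a b

/-- The restriction `r|_I := r ∩ (I × I)` of a relation to a set. -/
def restrictRel {α : Type*} (r : α → α → Prop) (I : Set α) : α → α → Prop :=
  fun a b => a ∈ I ∧ b ∈ I ∧ r a b

/-- The relation `⪯_I`. -/
def preRel {α : Type*} (Prec Resp : α → α → Prop) (I : Set α) : α → α → Prop :=
  Relation.ReflTransGen (restrictRel (ordRel Prec Resp) I)

/-- `I` is a down-set of `(Σ, r)`. -/
def IsDownSet {α : Type*} (r : α → α → Prop) (I : Set α) : Prop :=
  ∀ a b, r a b → b ∈ I → a ∈ I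

/-- A (first-passage) trace of the process. -/
def IsTrace {α : Type*} (Prec Resp : α → α → Prop) (τ : List α) : Prop :=
  τ.Nodup ∧
  (∀ a b, Prec a b → b ∈ τ → [a, b].Sublist τ) ∧
  (∀ a b, Resp a b → a ∈ τ → [a, b].Sublist τ)

/-- The image (set of terms) of the sequence `τ`. -/
def imList {α : Type*} (τ : List α) : Set α := {x | x ∈ τ}

lemma pair_sublist_aux {α : Type*} {r : α → α → Prop}
    (hanti : ∀ x y, r x y → r y x → x = y) :
    ∀ {l : List α}, l.Pairwise r →
      ∀ {a b : α}, a ∈ l → b ∈ l → r a b → a ≠ b → ([a, b]).Sublist l := by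
  intro l
  induction l with
  | nil => intro _ a b ha; cases ha
  | cons x t ih =>
    intro hl a b ha hb hr hne
    rcases List.mem_cons.mp ha with rfl | ha'
    · have hb' : b ∈ t := (List.mem_cons.mp hb).resolve_left (fun h => hne h.symm)
      exact (List.singleton_sublist.mpr hb').cons₂ a
    · rcases List.mem_cons.mp hb with rfl | hb'
      · have hba : r b a := List.rel_of_pairwise_cons hl ha'
        exact absurd (hanti a b hr hba) hne
      · exact (ih hl.of_cons ha' hb' hr hne).cons x

lemma idx_lt_aux {α : Type*} [DecidableEq α] :
    ∀ {l : List α}, l.Nodup → ∀ {a b : α}, ([a, b]).Sublist l →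
      l.idxOf a < l.idxOf b := by
  intro l
  induction l with
  | nil => intro _ a b h; exact absurd (h.subset (by simp)) (List.not_mem_nil (a := a))
  | cons x t ih =>
    intro hnd a b h
    obtain ⟨hx, hnd'⟩ := List.nodup_cons.mp hnd
    cases h with
    | cons _ h2 =>
      have ha : a ∈ t := h2.subset (by simp)
      have hb : b ∈ t := h2.subset (by simp)
      rw [List.idxOf_cons_ne _ (by rintro rfl; exact hx ha),
          List.idxOf_cons_ne _ (by rintro rfl; exact hx hb)]
      exact Nat.succ_lt_succ (ih hnd' h2)
    | cons_cons _ h' =>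
      have hb : b ∈ t := List.singleton_sublist.mp h'
      rw [List.idxOf_cons_self, List.idxOf_cons_ne _ (by rintro rfl; exact hx hb)]
      exact Nat.succ_pos _

/-- a set `I ⊆ Σ` is the image of some trace of `D` if and only if
`I` is a down-set of `(Σ, ≲occ)` and `⪯_I` is antisymmetric. -/
theorem possIm_characterization {α : Type*} [Fintype α] (Prec Resp : α → α → Prop)
    (hP : ∀ a b, Prec a b → a ≠ b) (hR : ∀ a b, Resp a b → a ≠ b)
    (I : Set α) :
    (∃ τ : List α, IsTrace Prec Resp τ ∧ imList τ = I) ↔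
      (IsDownSet (occRel Prec Resp) I ∧
        ∀ a b, preRel Prec Resp I a b → preRel Prec Resp I b a → a = b) := by
  classical
  constructor
  · rintro ⟨τ, ⟨hnd, hPrec, hResp⟩, rfl⟩
    constructor
    · intro a b hab
      induction hab with
      | refl => exact id
      | @tail c b h1 h2 ih =>
        intro hb
        apply ih
        rcases h2 with hp | hr
        · exact (hPrec c b hp hb).subset (by simp)
        · exact (hResp b c hr hb).subset (by simp)
    · have key : ∀ x y, preRel Prec Resp (imList τ) x y →
          x = y ∨ τ.idxOf x < τ.idxOf y := by
        intro x y h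
        induction h with
        | refl => exact Or.inl rfl
        | @tail c y h1 h2 ih =>
          obtain ⟨hcI, hyI, hord⟩ := h2
          have hsub : ([c, y]).Sublist τ := by
            rcases hord with hp | hr
            · exact hPrec c y hp hyI
            · exact hResp c y hr hcI
          have hlt := idx_lt_aux hnd hsub
          rcases ih with rfl | hlt'
          · exact Or.inr hlt
          · exact Or.inr (hlt'.trans hlt)
      intro a b h1 h2
      rcases key a b h1 with rfl | ha
      · rfl
      rcases key b a h2 with rfl | hb
      · rfl
      exact absurd (ha.trans hb) (lt_irrefl _)
  · rintro ⟨hdown, hanti⟩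
    haveI : IsPartialOrder α (preRel Prec Resp I) :=
      { refl := fun _ => Relation.ReflTransGen.refl
        trans := fun _ _ _ => Relation.ReflTransGen.trans
        antisymm := hanti }
    obtain ⟨s, hlin, hrs⟩ := extend_partialOrder (preRel Prec Resp I)
    haveI := hlin
    letI : DecidableRel s := fun _ _ => Classical.propDecidable _
    set τ := (Set.toFinite I).toFinset.sort s with hτ
    have hmemτ : ∀ x, x ∈ τ ↔ x ∈ I := by
      intro x; rw [hτ, Finset.mem_sort, Set.Finite.mem_toFinset]
    have hsorted : τ.Pairwise s := Finset.pairwise_sort _ s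
    have hnd : τ.Nodup := Finset.sort_nodup _ s
    have santi : ∀ x y, s x y → s y x → x = y := fun x y h1 h2 => antisymm h1 h2
    have hkey : ∀ a b, a ∈ I → b ∈ I → ordRel Prec Resp a b → a ≠ b → ([a, b]).Sublist τ := by
      intro a b haI hbI hord hne
      have hpre : preRel Prec Resp I a b :=
        Relation.ReflTransGen.single ⟨haI, hbI, hord⟩
      exact pair_sublist_aux santi hsorted ((hmemτ a).mpr haI) ((hmemτ b).mpr hbI)
        (hrs a b hpre) hne
    refine ⟨τ, ⟨hnd, ?_, ?_⟩, ?_⟩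
    · intro a b hp hbτ
      have hbI := (hmemτ b).mp hbτ
      have haI : a ∈ I := hdown a b (Relation.ReflTransGen.single (Or.inl hp)) hbI
      exact hkey a b haI hbI (Or.inl hp) (hP a b hp)
    · intro a b hr haτ
      have haI := (hmemτ a).mp haτ
      have hbI : b ∈ I := hdown b a (Relation.ReflTransGen.single (Or.inr hr)) haI
      exact hkey a b haI hbI (Or.inr hr) (hR a b hr)
    · ext x; exact hmemτ x
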